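/- Let G be a connected graph and W' ⊆ V(G) with |W'| ≥ 2 such that every pair of vertices in W' is at distance at most 2. Then W' is not an m-resolving set of G. -/
import Mathlib

open SimpleGraph

/-- The multiset of distances from `v` to the vertices of `W`. -/
noncomputable def mrep {V : Type*} (G : SimpleGraph V) (W : Finset V) (v : V) : Multiset ℕ :=
  W.val.map (fun w => G.dist v w)

/-- `W` is an m-resolving set of `G`: distinct vertices have distinct
representation multisets. -/
def IsMResolving {V : Type*} (G : SimpleGraph V) (W : Finset V) : Prop :=
  ∀ u v : V, u ≠ v → mrep G W u ≠ mrep G W v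

/-- The multiset dimension of `G`, equal to `⊤` if `G` has no m-resolving set. -/
noncomputable def mdim {V : Type*} (G : SimpleGraph V) : ℕ∞ :=
  ⨅ W : {W : Finset V // IsMResolving G W}, (W.1.card : ℕ∞)

private lemma card_count_sum (s : Multiset ℕ) (hs : ∀ x ∈ s, x ≤ 2) :
    s.card = s.count 0 + s.count 1 + s.count 2 := by
  induction s using Multiset.induction with
  | empty => simp
  | cons a t ih =>
    have ha : a ≤ 2 := hs a (Multiset.mem_cons_self a t)
    have ht := ih (fun x hx => hs x (Multiset.mem_cons_of_mem hx))
    interval_cases a <;> simp [Multiset.count_cons, ht] <;> omega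

theorem stmt_6 {V : Type*} (G : SimpleGraph V) (hG : G.Connected) (W' : Finset V)
    (hcard : 2 ≤ W'.card) (hd : ∀ u ∈ W', ∀ v ∈ W', G.dist u v ≤ 2) :
    ¬ IsMResolving G W' := by
  classical
  intro hres
  set p := W'.card with hp
  -- basic facts
  have hmem : ∀ w ∈ W', ∀ x ∈ W', G.dist w x ∈ mrep G W' w := by
    intro w hw x hx
    exact Multiset.mem_map.2 ⟨x, hx, rfl⟩
  have hle : ∀ w ∈ W', ∀ x ∈ (mrep G W' w), x ≤ 2 := by
    intro w hw x hx
    obtain ⟨y, hy, rfl⟩ := Multiset.mem_map.1 hx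
    exact hd w hw y hy
  have hcount0 : ∀ w ∈ W', (mrep G W' w).count 0 = 1 := by
    intro w hw
    rw [mrep, Multiset.count_map]
    have hiff : ∀ x ∈ W'.val, ((0:ℕ) = G.dist w x ↔ x = w) := by
      intro x hx
      rw [eq_comm, hG.dist_eq_zero_iff, eq_comm]
    rw [Multiset.filter_congr hiff]
    have hfw : Multiset.filter (fun x => x = w) W'.val = {w} := by
      ext a
      by_cases h : a = w
      · subst h
        simp [Multiset.count_filter, Multiset.count_eq_one_of_mem W'.nodup hw]
      · simp [Multiset.count_filter, h]
    rw [hfw]; simp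
  have hcardm : ∀ w, (mrep G W' w).card = p := by
    intro w; simp [mrep, hp]
  have hsum : ∀ w ∈ W', 1 + (mrep G W' w).count 1 + (mrep G W' w).count 2 = p := by
    intro w hw
    have := card_count_sum (mrep G W' w) (hle w hw)
    rw [hcardm w, hcount0 w hw] at this
    omega
  -- injectivity of the count-of-1 function on W'
  set f : V → ℕ := fun w => (mrep G W' w).count 1 with hf
  have hinj : Set.InjOn f W' := by
    intro w1 hw1 w2 hw2 heq
    by_contra hne
    apply hres w1 w2 hne
    ext n
    have h1 := hsum w1 hw1
    have h2 := hsum w2 hw2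
    rcases n with _ | _ | _ | n
    · rw [hcount0 w1 hw1, hcount0 w2 hw2]
    · exact heq
    · show (mrep G W' w1).count 2 = (mrep G W' w2).count 2
      simp only [hf] at heq h1 h2; omega
    · {
      rw [Multiset.count_eq_zero_of_notMem, Multiset.count_eq_zero_of_notMem]
      · intro h; have := hle w2 hw2 _ h; omega
      · intro h; have := hle w1 hw1 _ h; omega }
  -- the image of f on W' is all of range p
  have hbound : ∀ w ∈ W', f w < p := by
    intro w hw; have := hsum w hw; simp only [hf]; omega
  have himg : W'.image f = Finset.range p := by
    apply Finset.eq_of_subset_of_card_le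
    · intro n hn
      obtain ⟨w, hw, rfl⟩ := Finset.mem_image.1 hn
      exact Finset.mem_range.2 (hbound w hw)
    · rw [Finset.card_range, Finset.card_image_of_injOn hinj]
  have h1mem : p - 1 ∈ W'.image f := by
    rw [himg]; exact Finset.mem_range.2 (by omega)
  have h0mem : 0 ∈ W'.image f := by
    rw [himg]; exact Finset.mem_range.2 (by omega)
  obtain ⟨w1, hw1, hfw1⟩ := Finset.mem_image.1 h1mem
  obtain ⟨w2, hw2, hfw2⟩ := Finset.mem_image.1 h0mem
  have hne : w1 ≠ w2 := by
    intro h; subst h; omega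
  -- w1 has no vertex at distance 2
  have hc2 : (mrep G W' w1).count 2 = 0 := by
    have := hsum w1 hw1; simp only [hf] at hfw1; omega
  have hd12 := hmem w1 hw1 w2 hw2
  have hle2 : G.dist w1 w2 ≤ 2 := hd w1 hw1 w2 hw2
  have hne0 : G.dist w1 w2 ≠ 0 := fun h => hne (hG.dist_eq_zero_iff.mp h)
  have hne2 : G.dist w1 w2 ≠ 2 := by
    intro h
    rw [h] at hd12
    exact Multiset.count_eq_zero.mp hc2 hd12
  have hone : G.dist w2 w1 = 1 := by rw [SimpleGraph.dist_comm]; omega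
  -- w2 has no vertex at distance 1
  have hd21 := hmem w2 hw2 w1 hw1
  rw [hone] at hd21
  have := Multiset.count_eq_zero.mp hfw2 hd21
  exact this
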